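/- Let u, v > 0 be real numbers and set R₁ = u²·v² − 4·u²·v − 4·u·v² + 18·u·v − 27. If R₁ > 0, then the set of positive equilibria of Kopel's duopoly model, i.e. the set { (x, y) ∈ ℝ² : x > 0, y > 0, x = u·y·(1−y), y = v·x·(1−x) }, has exactly three elements. -/

import Mathlib

set_option maxHeartbeats 1000000 in
/-- If R₁ > 0, Kopel's model has exactly three positive equilibria. -/
theorem kopel_three_positive_equilibria
    (u v : ℝ) (hu : 0 < u) (hv : 0 < v)
    (hR1 : 0 < u ^ 2 * v ^ 2 - 4 * u ^ 2 * v - 4 * u * v ^ 2 + 18 * u * v - 27) :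
    {p : ℝ × ℝ | 0 < p.1 ∧ 0 < p.2 ∧
      p.1 = u * p.2 * (1 - p.2) ∧ p.2 = v * p.1 * (1 - p.1)}.encard = 3 := by
  -- u > 3 and v > 3
  have hv3 : 3 < v := by
    by_contra h
    push_neg at h
    nlinarith [mul_nonneg hv.le (sq_nonneg (2*(4-v)*u - 18 + 4*v)),
      mul_nonneg (mul_nonneg (by linarith : (0:ℝ) ≤ 3 - v) (by linarith : (0:ℝ) ≤ 3 - v))
        (by linarith : (0:ℝ) ≤ 3 - v)]
  have hu3 : 3 < u := by
    by_contra h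
    push_neg at h
    nlinarith [mul_nonneg hu.le (sq_nonneg (2*(4-u)*v - 18 + 4*u)),
      mul_nonneg (mul_nonneg (by linarith : (0:ℝ) ≤ 3 - u) (by linarith : (0:ℝ) ≤ 3 - u))
        (by linarith : (0:ℝ) ≤ 3 - u)]
  -- the square root
  set w : ℝ := Real.sqrt (v^2 - 3*v) with hwdef
  have hw2 : w^2 = v^2 - 3*v := Real.sq_sqrt (by nlinarith)
  have hw : 0 < w := Real.sqrt_pos.mpr (by nlinarith)
  clear_value w
  have hwv : w < v := by
    by_contra h
    push_neg at h
    nlinarith [hw2, mul_le_mul h h hv.le (le_trans hv.le h)]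
  -- the cubic
  set F : ℝ → ℝ := fun x => u*v^2*x^3 - 2*u*v^2*x^2 + u*v*(v+1)*x + (1 - u*v) with hF
  clear_value F
  have hcont : Continuous F := by rw [hF]; continuity
  -- values at critical points
  have hA : 27*v^3 * F ((2*v-w)/(3*v)) =
      (2*u*v^5 - 9*u*v^4 + 27*v^3) - (-(2*u*v^3*(v-3)))*w := by
    have h3v : (3*v) ≠ 0 := by positivity
    simp only [hF]
    field_simp
    linear_combination (-(27*u*w)) * hw2
  have hB : 27*v^3 * F ((2*v+w)/(3*v)) =
      (2*u*v^5 - 9*u*v^4 + 27*v^3) + (-(2*u*v^3*(v-3)))*w := by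
    have h3v : (3*v) ≠ 0 := by positivity
    simp only [hF]
    field_simp
    linear_combination (27*u*w) * hw2
  obtain ⟨P, hPdef⟩ : ∃ P : ℝ, P = 2*u*v^5 - 9*u*v^4 + 27*v^3 := ⟨_, rfl⟩
  obtain ⟨Q, hQdef⟩ : ∃ Q : ℝ, Q = -(2*u*v^3*(v-3)) := ⟨_, rfl⟩
  rw [← hPdef, ← hQdef] at hA hB
  have hQneg : Q < 0 := by
    rw [hQdef]
    have h1 : 0 < 2*u*v^3*(v-3) :=
      mul_pos (mul_pos (mul_pos two_pos hu) (pow_pos hv 3)) (by linarith)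
    linarith
  have hprod : (P - Q*w) * (P + Q*w) =
      -(27*v^6*(u^2 * v^2 - 4*u^2*v - 4*u*v^2 + 18*u*v - 27)) := by
    rw [hPdef, hQdef]
    linear_combination (-(2*u*v^3*(v-3))^2) * hw2
  have hprodneg : (P - Q*w) * (P + Q*w) < 0 := by
    rw [hprod]
    nlinarith [pow_pos hv 6]
  have hBneg : P + Q*w < 0 := by
    by_contra hcon
    push_neg at hcon
    have h1 : 0 < P - Q*w := by nlinarith [mul_pos (neg_pos.mpr hQneg) hw]
    nlinarith [mul_nonneg h1.le hcon]
  have hApos : 0 < P - Q*w := by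
    by_contra hcon
    push_neg at hcon
    nlinarith [mul_nonneg (neg_nonneg.mpr hcon) (neg_nonneg.mpr hBneg.le)]
  have hv27 : (0:ℝ) < 27*v^3 := by positivity
  have hFc1 : 0 < F ((2*v-w)/(3*v)) := by nlinarith [hA]
  have hFc2 : F ((2*v+w)/(3*v)) < 0 := by nlinarith [hB]
  have hF0 : F 0 < 0 := by
    have : F 0 = 1 - u*v := by rw [hF]; norm_num
    rw [this]; nlinarith
  have hF1 : 0 < F 1 := by
    have : F 1 = 1 := by rw [hF]; ring_nf
    rw [this]; norm_num
  -- ordering of the test points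
  have hc1pos : 0 < (2*v-w)/(3*v) := div_pos (by linarith) (by linarith)
  have hc1c2 : (2*v-w)/(3*v) < (2*v+w)/(3*v) := by
    rw [div_lt_div_iff₀ (by linarith) (by linarith)]
    nlinarith
  have hc2lt1 : (2*v+w)/(3*v) < 1 := by
    rw [div_lt_one (by linarith)]
    linarith
  -- IVT: three roots
  obtain ⟨r1, hr1mem, hFr1⟩ :=
    intermediate_value_Ioo (le_of_lt hc1pos) hcont.continuousOn ⟨hF0, hFc1⟩
  obtain ⟨r2, hr2mem, hFr2⟩ :=
    intermediate_value_Ioo' (le_of_lt hc1c2) hcont.continuousOn ⟨hFc2, hFc1⟩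
  obtain ⟨r3, hr3mem, hFr3⟩ :=
    intermediate_value_Ioo (le_of_lt hc2lt1) hcont.continuousOn ⟨hFc2, hF1⟩
  obtain ⟨hr1a, hr1b⟩ := hr1mem
  obtain ⟨hr2a, hr2b⟩ := hr2mem
  obtain ⟨hr3a, hr3b⟩ := hr3mem
  have h12 : r1 < r2 := lt_trans hr1b hr2a
  have h23 : r2 < r3 := lt_trans hr2b hr3a
  have hr1lt1 : r1 < 1 := by linarith
  have hr2pos : 0 < r2 := by linarith
  have hr2lt1 : r2 < 1 := by linarith
  have hr3pos : 0 < r3 := by linarith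
  -- expanded root equations
  have he1 : u*v^2*r1^3 - 2*u*v^2*r1^2 + u*v*(v+1)*r1 + (1 - u*v) = 0 := by
    have := hFr1; rw [hF] at this; exact this
  have he2 : u*v^2*r2^3 - 2*u*v^2*r2^2 + u*v*(v+1)*r2 + (1 - u*v) = 0 := by
    have := hFr2; rw [hF] at this; exact this
  have he3 : u*v^2*r3^3 - 2*u*v^2*r3^2 + u*v*(v+1)*r3 + (1 - u*v) = 0 := by
    have := hFr3; rw [hF] at this; exact this
  -- the cubic has at most these three roots
  set pol : Polynomial ℝ := Polynomial.C (u*v^2) * Polynomial.X^3 +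
      Polynomial.C (-(2*u*v^2)) * Polynomial.X^2 +
      Polynomial.C (u*v*(v+1)) * Polynomial.X + Polynomial.C (1-u*v) with hpol
  clear_value pol
  have heval : ∀ x : ℝ, pol.eval x = F x := by
    intro x
    rw [hpol, hF]
    simp [Polynomial.eval_add, Polynomial.eval_mul, Polynomial.eval_pow]
    ring
  have hdeg : pol.natDegree = 3 := by
    rw [hpol]
    compute_degree!
    exact ⟨ne_of_gt hu, ne_of_gt hv⟩
  have hne0 : pol ≠ 0 := by
    intro h
    rw [h, Polynomial.natDegree_zero] at hdeg
    exact absurd hdeg (by norm_num)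
  have hroot_mem : ∀ x : ℝ, F x = 0 → x ∈ pol.roots.toFinset := by
    intro x hx
    exact Multiset.mem_toFinset.mpr ((Polynomial.mem_roots').mpr ⟨hne0, (heval x).trans hx⟩)
  have hcard : pol.roots.toFinset.card ≤ 3 := by
    calc pol.roots.toFinset.card ≤ Multiset.card pol.roots := Multiset.toFinset_card_le _
    _ ≤ pol.natDegree := Polynomial.card_roots' pol
    _ = 3 := hdeg
  have hne12 : r1 ≠ r2 := ne_of_lt h12
  have hne13 : r1 ≠ r3 := ne_of_lt (lt_trans h12 h23)
  have hne23 : r2 ≠ r3 := ne_of_lt h23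
  have hfs : ({r1, r2, r3} : Finset ℝ).card = 3 := by
    rw [Finset.card_insert_of_notMem (by simp [hne12, hne13]),
      Finset.card_insert_of_notMem (by simp [hne23]), Finset.card_singleton]
  have hsub : ({r1, r2, r3} : Finset ℝ) ⊆ pol.roots.toFinset := by
    intro x hx
    simp only [Finset.mem_insert, Finset.mem_singleton] at hx
    rcases hx with h | h | h <;> subst h
    · exact hroot_mem _ hFr1
    · exact hroot_mem _ hFr2
    · exact hroot_mem _ hFr3
  have heqfs : ({r1, r2, r3} : Finset ℝ) = pol.roots.toFinset :=
    Finset.eq_of_subset_of_card_le hsub (by rw [hfs]; exact hcard)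
  have htri : ∀ x : ℝ, F x = 0 → x = r1 ∨ x = r2 ∨ x = r3 := by
    intro x hx
    have hmem := hroot_mem x hx
    rw [← heqfs] at hmem
    simpa using hmem
  -- set equality
  have hsetEq : {p : ℝ × ℝ | 0 < p.1 ∧ 0 < p.2 ∧
      p.1 = u * p.2 * (1 - p.2) ∧ p.2 = v * p.1 * (1 - p.1)}
      = {(r1, v*r1*(1-r1)), (r2, v*r2*(1-r2)), (r3, v*r3*(1-r3))} := by
    ext ⟨x, y⟩
    simp only [Set.mem_setOf_eq, Set.mem_insert_iff, Set.mem_singleton_iff, Prod.mk.injEq]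
    constructor
    · rintro ⟨hx, hy, heq1, heq2⟩
      have hxF : F x = 0 := by
        have key : x * F x = 0 := by
          rw [hF]
          linear_combination heq1 + (u*(1 - y - v*x*(1-x))) * heq2
        exact (mul_eq_zero.mp key).resolve_left (ne_of_gt hx)
      rcases htri x hxF with h | h | h
      · left; exact ⟨h, by rw [h] at heq2; exact heq2⟩
      · right; left; exact ⟨h, by rw [h] at heq2; exact heq2⟩
      · right; right; exact ⟨h, by rw [h] at heq2; exact heq2⟩
    · rintro (⟨hx, hy⟩ | ⟨hx, hy⟩ | ⟨hx, hy⟩) <;> subst hx <;> subst hy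
      · exact ⟨hr1a, mul_pos (mul_pos hv hr1a) (by linarith),
          by linear_combination x * he1, rfl⟩
      · exact ⟨hr2pos, mul_pos (mul_pos hv hr2pos) (by linarith),
          by linear_combination x * he2, rfl⟩
      · exact ⟨hr3pos, mul_pos (mul_pos hv hr3pos) (by linarith),
          by linear_combination x * he3, rfl⟩
  rw [hsetEq]
  rw [Set.encard_insert_of_notMem, Set.encard_insert_of_notMem, Set.encard_singleton]
  · rfl
  · simp only [Set.mem_singleton_iff, Prod.mk.injEq, not_and]
    exact fun h => absurd h hne23
  · simp only [Set.mem_insert_iff, Set.mem_singleton_iff, Prod.mk.injEq, not_or, not_and]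
    exact ⟨fun h => absurd h hne12, fun h => absurd h hne13⟩
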